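/- (Angle inversion for unary amplitudes.) Let w_0, …, w_d be nonnegative reals with Σ_{k=0}^{d} w_k² = 1 and such that Σ_{p=0}^{k−1} w_p² < 1 for all k ≤ d−1. Define θ_k = 2 arccos( w_k / sqrt(1 − Σ_{p=0}^{k−1} w_p²) ) for k = 0,…,d−1. Then the sequential-rotation amplitudes satisfy (∏_{m=0}^{k−1} sin(θ_m/2)) cos(θ_k/2) = w_k for 0 ≤ k ≤ d−1 and ∏_{m=0}^{d−1} sin(θ_m/2) = w_d. -/

import Mathlib

open Finset

/-- angle inversion for unary amplitudes: given nonnegative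
`w_0, …, w_d` with `Σ w_k² = 1` and partial sums `Σ_{p<k} w_p² < 1` for `k ≤ d−1`,
the angles `θ_k = 2 arccos(w_k / √(1 − Σ_{p<k} w_p²))` reproduce the amplitudes:
`(∏_{m<k} sin(θ_m/2)) cos(θ_k/2) = w_k` for `k ≤ d−1` and `∏_{m<d} sin(θ_m/2) = w_d`. -/
theorem stmt13 (d : ℕ) (w : ℕ → ℝ)
    (hnn : ∀ k ≤ d, 0 ≤ w k)
    (hsum : ∑ k ∈ Finset.range (d + 1), (w k) ^ 2 = 1)
    (hpartial : ∀ k < d, ∑ p ∈ Finset.range k, (w p) ^ 2 < 1)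
    (θ : ℕ → ℝ)
    (hθ : ∀ k < d, θ k =
      2 * Real.arccos (w k / Real.sqrt (1 - ∑ p ∈ Finset.range k, (w p) ^ 2))) :
    (∀ k < d,
      (∏ m ∈ Finset.range k, Real.sin (θ m / 2)) * Real.cos (θ k / 2) = w k) ∧
    (∏ m ∈ Finset.range d, Real.sin (θ m / 2)) = w d := by
  set S : ℕ → ℝ := fun k => 1 - ∑ p ∈ Finset.range k, (w p) ^ 2 with hS
  have hpartle : ∀ k ≤ d + 1, ∑ p ∈ Finset.range k, (w p) ^ 2 ≤ 1 := by
    intro k hk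
    calc ∑ p ∈ Finset.range k, (w p) ^ 2
        ≤ ∑ p ∈ Finset.range (d + 1), (w p) ^ 2 :=
          Finset.sum_le_sum_of_subset_of_nonneg
            (Finset.range_subset_range.mpr hk) (fun i _ _ => sq_nonneg _)
      _ = 1 := hsum
  have hSpos : ∀ k < d, 0 < S k := fun k hk => by
    simp only [hS]; linarith [hpartial k hk]
  have hwle : ∀ k < d, (w k) ^ 2 ≤ S k := by
    intro k hk
    have := hpartle (k + 1) (by omega)
    rw [Finset.sum_range_succ] at this
    simp only [hS]; linarith
  have key : ∀ k ≤ d, (∏ m ∈ Finset.range k, Real.sin (θ m / 2)) = Real.sqrt (S k) := by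
    intro k hk
    induction k with
    | zero => simp [hS]
    | succ n ih =>
      have hnd : n < d := hk
      have hSn := hSpos n hnd
      have hsqrt_pos : 0 < Real.sqrt (S n) := Real.sqrt_pos.mpr hSn
      rw [Finset.prod_range_succ, ih (le_of_lt hnd), hθ n hnd]
      have h2 : (2 : ℝ) * Real.arccos (w n / Real.sqrt (S n)) / 2
          = Real.arccos (w n / Real.sqrt (S n)) := by ring
      rw [h2, Real.sin_arccos]
      have hx2 : (w n / Real.sqrt (S n)) ^ 2 = (w n) ^ 2 / S n := by
        rw [div_pow, Real.sq_sqrt (le_of_lt hSn)]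
      have h1 : 1 - (w n / Real.sqrt (S n)) ^ 2 = (S n - (w n) ^ 2) / S n := by
        rw [hx2]; field_simp
      rw [h1, Real.sqrt_div (by linarith [hwle n hnd]), mul_comm,
        div_mul_cancel₀ _ (ne_of_gt hsqrt_pos)]
      congr 1
      simp only [hS, Finset.sum_range_succ]
      ring
  constructor
  · intro k hk
    have hSk := hSpos k hk
    have hsqrt_pos : 0 < Real.sqrt (S k) := Real.sqrt_pos.mpr hSk
    rw [key k (le_of_lt hk), hθ k hk]
    have h2 : (2 : ℝ) * Real.arccos (w k / Real.sqrt (S k)) / 2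
        = Real.arccos (w k / Real.sqrt (S k)) := by ring
    rw [h2, Real.cos_arccos]
    · field_simp
    · have := div_nonneg (hnn k (le_of_lt hk)) (le_of_lt hsqrt_pos)
      linarith
    · rw [div_le_one hsqrt_pos]
      exact (Real.le_sqrt (hnn k (le_of_lt hk)) (by linarith [hwle k hk, sq_nonneg (w k)])).mpr (hwle k hk)
  · rw [key d le_rfl]
    have hSd : S d = (w d) ^ 2 := by
      have := hsum
      rw [Finset.sum_range_succ] at this
      simp only [hS]; linarith
    rw [hSd, Real.sqrt_sq (hnn d le_rfl)]
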